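/- Let A be a Banach lattice algebra with identity e and let p, q be order idempotents of A. Then: pq = qp; pq is an order idempotent and pq equals the infimum p ⊓ q in A; p + q − pq is an order idempotent and equals the supremum p ⊔ q in A; and e − p is an order idempotent. Consequently the set of order idempotents of A forms a Boolean algebra with these operations, minimum 0 and maximum e, whose suprema and infima coincide with those of A. -/

import Mathlib

/-- An *order idempotent* of a Banach lattice algebra with identity `e` is an element
`p` with `p² = p` and `0 ≤ p ≤ e`. -/
def IsOrderIdempotent {A : Type*} [NormedAddCommGroup A] [Lattice A] [HasSolidNorm A]
    [IsOrderedAddMonoid A] [NormedSpace ℝ A]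
    (mul : A →ₗ[ℝ] A →ₗ[ℝ] A) (e p : A) : Prop :=
  mul p p = p ∧ 0 ≤ p ∧ p ≤ e

/-- Alekhno. In a Banach lattice algebra with identity `e`, the
order idempotents commute and form a Boolean algebra with `p ∧ q = pq`,
`p ∨ q = p + q − pq` and complement `e − p`, whose suprema and infima coincide with
those of `A`. -/
theorem order_idempotents_boolean_algebra
    {A : Type*} [NormedAddCommGroup A] [Lattice A] [HasSolidNorm A]
    [IsOrderedAddMonoid A] [NormedSpace ℝ A]
    [PosSMulStrictMono ℝ A] [CompleteSpace A]
    (mul : A →ₗ[ℝ] A →ₗ[ℝ] A)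
    (mul_assoc : ∀ a b c : A, mul (mul a b) c = mul a (mul b c))
    (norm_mul_le : ∀ a b : A, ‖mul a b‖ ≤ ‖a‖ * ‖b‖)
    (mul_nonneg : ∀ a b : A, 0 ≤ a → 0 ≤ b → 0 ≤ mul a b)
    (e : A) (one_mul : ∀ a : A, mul e a = a) (mul_one : ∀ a : A, mul a e = a)
    (norm_e : ‖e‖ = 1)
    (p q : A) (hp : IsOrderIdempotent mul e p) (hq : IsOrderIdempotent mul e q) :
    mul p q = mul q p ∧
    IsOrderIdempotent mul e (mul p q) ∧ mul p q = p ⊓ q ∧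
    IsOrderIdempotent mul e (p + q - mul p q) ∧ p + q - mul p q = p ⊔ q ∧
    IsOrderIdempotent mul e (e - p) := by
  obtain ⟨hp2, hp0, hpe⟩ := hp
  obtain ⟨hq2, hq0, hqe⟩ := hq
  -- monotonicity of the product in each argument
  have monoL : ∀ a b c : A, a ≤ b → 0 ≤ c → mul a c ≤ mul b c := by
    intro a b c hab hc
    have h := mul_nonneg (b - a) c (sub_nonneg.mpr hab) hc
    rw [map_sub, LinearMap.sub_apply] at h
    exact sub_nonneg.mp h
  have monoR : ∀ c a b : A, a ≤ b → 0 ≤ c → mul c a ≤ mul c b := by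
    intro c a b hab hc
    have h := mul_nonneg c (b - a) hc (sub_nonneg.mpr hab)
    rw [map_sub] at h
    exact sub_nonneg.mp h
  -- absorption: if `r` is an order idempotent and `0 ≤ x ≤ r` then `r x = x`
  have key : ∀ r x : A, mul r r = r → r ≤ e → 0 ≤ x → x ≤ r → mul r x = x := by
    intro r x hr2 hre hx0 hxr
    have h1 : 0 ≤ x - mul r x := by
      have h := mul_nonneg (e - r) x (sub_nonneg.mpr hre) hx0
      rw [map_sub, LinearMap.sub_apply, one_mul] at h
      exact h
    have h2 : x ≤ mul r x := by
      have h := mul_nonneg (e - r) (r - x) (sub_nonneg.mpr hre) (sub_nonneg.mpr hxr)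
      simp only [map_sub, LinearMap.sub_apply, one_mul, hr2] at h
      have h' : 0 ≤ mul r x - x := by abel_nf at h ⊢; convert h using 2 <;> abel
      exact sub_nonneg.mp h'
    have h1' : mul r x ≤ x := sub_nonneg.mp h1
    exact le_antisymm h1' h2
  -- general infimum lemma
  have inf_lemma : ∀ r s : A, mul r r = r → 0 ≤ r → r ≤ e → mul s s = s → 0 ≤ s → s ≤ e →
      mul r s = r ⊓ s := by
    intro r s hr2 hr0 hre hs2 hs0 hse
    refine le_antisymm (le_inf ?_ ?_) ?_
    · have := monoR r s e hse hr0
      rwa [mul_one] at this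
    · have := monoL r e s hre hs0
      rwa [one_mul] at this
    · have h0 : (0 : A) ≤ r ⊓ s := le_inf hr0 hs0
      have habs : mul r (r ⊓ s) = r ⊓ s := key r (r ⊓ s) hr2 hre h0 inf_le_left
      have := monoR r (r ⊓ s) s inf_le_right hr0
      rwa [habs] at this
  have hinf : mul p q = p ⊓ q := inf_lemma p q hp2 hp0 hpe hq2 hq0 hqe
  have hinf' : mul q p = q ⊓ p := inf_lemma q p hq2 hq0 hqe hp2 hp0 hpe
  have hcomm : mul p q = mul q p := by rw [hinf, hinf', inf_comm]
  -- facts about m = pq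
  have hpm : mul p (mul p q) = mul p q := by rw [← mul_assoc, hp2]
  have hmq : mul (mul p q) q = mul p q := by rw [mul_assoc, hq2]
  have hmp : mul (mul p q) p = mul p q := by rw [hcomm, mul_assoc, hp2]
  have hqm : mul q (mul p q) = mul p q := by rw [hcomm, ← mul_assoc, hq2]
  have hmm : mul (mul p q) (mul p q) = mul p q := by
    rw [← mul_assoc, hmp, hmq]
  -- pq order idempotent
  have hpq_oi : IsOrderIdempotent mul e (mul p q) := by
    refine ⟨hmm, mul_nonneg p q hp0 hq0, ?_⟩
    rw [hinf]; exact le_trans inf_le_left hpe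
  -- sup formula
  have hsup : p + q - mul p q = p ⊔ q := by
    have h : p ⊓ q + p ⊔ q = p + q := inf_add_sup p q
    rw [hinf, ← h]
    abel
  -- p + q - pq order idempotent
  have hsup_oi : IsOrderIdempotent mul e (p + q - mul p q) := by
    refine ⟨?_, ?_, ?_⟩
    · simp only [map_sub, map_add, LinearMap.sub_apply, LinearMap.add_apply,
        hp2, hq2, hcomm.symm, hpm, hmq, hmp, hqm, hmm]
      abel
    · rw [hsup]; exact le_trans hp0 le_sup_left
    · rw [hsup]; exact sup_le hpe hqe
  -- e - p order idempotent
  have hep : IsOrderIdempotent mul e (e - p) := by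
    refine ⟨?_, sub_nonneg.mpr hpe, ?_⟩
    · simp only [map_sub, LinearMap.sub_apply, one_mul, mul_one, hp2]
      abel
    · have : (0:A) ≤ p := hp0
      calc e - p ≤ e - 0 := by exact sub_le_sub_left this e
        _ = e := sub_zero e
  exact ⟨hcomm, hpq_oi, hinf, hsup_oi, hsup, hep⟩
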